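/- Let Q be a rack with operation ▷ and dual operation ◁, and let S be a nonempty subset of Q. Then the set L(S) of all elements of Q expressible as fully left-associated words with letters in S is closed under both operations ▷ and ◁ (i.e., if a, b ∈ L(S) then a ▷ b ∈ L(S) and a ◁ b ∈ L(S)); consequently L(S) equals the subrack of Q generated by S. -/
import Mathlib


/-- Fully left-associated words with letters in `S`: an element of `S`, or a word acted on
(by `tr` or `tl`) by an element of `S`. -/
inductive LWord {Q : Type*} (tr tl : Q → Q → Q) (S : Set Q) : Q → Prop
  | base : ∀ x ∈ S, LWord tr tl S x
  | ofTr : ∀ {a : Q} (x : Q), LWord tr tl S a → x ∈ S → LWord tr tl S (tr a x)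
  | ofTl : ∀ {a : Q} (x : Q), LWord tr tl S a → x ∈ S → LWord tr tl S (tl a x)

/-- In a rack `(Q, ▷)` with dual `◁` and a nonempty `S ⊆ Q`, the set `L(S)` of
fully left-associated words with letters in `S` is closed under both `▷` and `◁`, and hence
equals the subrack generated by `S` (the smallest subset of `Q` containing `S` and closed
under both operations). -/
theorem stmt9 {Q : Type*} (tr tl : Q → Q → Q)
    (hqii : ∀ a b : Q, ∃! c : Q, a = tr c b)
    (hqiii : ∀ a b c : Q, tr (tr a b) c = tr (tr a c) (tr b c))
    (hdual1 : ∀ x y : Q, tl (tr x y) y = x)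
    (hdual2 : ∀ x y : Q, tr (tl x y) y = x)
    (S : Set Q) (hS : S.Nonempty) :
    (∀ a b : Q, LWord tr tl S a → LWord tr tl S b →
      LWord tr tl S (tr a b) ∧ LWord tr tl S (tl a b)) ∧
    {a : Q | LWord tr tl S a} =
      ⋂₀ {T : Set Q | S ⊆ T ∧ (∀ a ∈ T, ∀ b ∈ T, tr a b ∈ T) ∧
        (∀ a ∈ T, ∀ b ∈ T, tl a b ∈ T)} := by
  -- uniqueness: tr w y = a → tl a y = w
  have huniq : ∀ w y : Q, tl (tr w y) y = w := hdual1
  have key : ∀ b : Q, LWord tr tl S b → ∀ a : Q, LWord tr tl S a →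
      LWord tr tl S (tr a b) ∧ LWord tr tl S (tl a b) := by
    intro b hb
    induction hb with
    | base x hx =>
      intro a ha
      exact ⟨LWord.ofTr x ha hx, LWord.ofTl x ha hx⟩
    | ofTr x hc hx ih =>
      rename_i c
      intro a ha
      constructor
      · have e : tr a (tr c x) = tr (tr (tl a x) c) x := by
          rw [hqiii (tl a x) c x, hdual2]
        rw [e]
        exact LWord.ofTr x ((ih (tl a x) (LWord.ofTl x ha hx)).1) hx
      · have e : tl a (tr c x) = tr (tl (tl a x) c) x := by
          have : tr (tr (tl (tl a x) c) x) (tr c x) = a := by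
            rw [← hqiii (tl (tl a x) c) c x, hdual2, hdual2]
          calc tl a (tr c x) = tl (tr (tr (tl (tl a x) c) x) (tr c x)) (tr c x) := by rw [this]
            _ = tr (tl (tl a x) c) x := hdual1 _ _
        rw [e]
        exact LWord.ofTr x ((ih (tl a x) (LWord.ofTl x ha hx)).2) hx
    | ofTl x hc hx ih =>
      rename_i c
      -- identity: tr u (tl c x) = tl (tr (tr u x) c) x
      have base : ∀ u : Q, tr u (tl c x) = tl (tr (tr u x) c) x := by
        intro u
        have h1 : tr (tr u (tl c x)) x = tr (tr u x) c := by
          rw [hqiii u (tl c x) x, hdual2]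
        calc tr u (tl c x) = tl (tr (tr u (tl c x)) x) x := (hdual1 _ _).symm
          _ = tl (tr (tr u x) c) x := by rw [h1]
      intro a ha
      constructor
      · rw [base a]
        exact LWord.ofTl x ((ih (tr a x) (LWord.ofTr x ha hx)).1) hx
      · have e : tl a (tl c x) = tl (tl (tr a x) c) x := by
          have : tr (tl (tl (tr a x) c) x) (tl c x) = a := by
            rw [base, hdual2, hdual2, hdual1]
          calc tl a (tl c x) = tl (tr (tl (tl (tr a x) c) x) (tl c x)) (tl c x) := by rw [this]
            _ = tl (tl (tr a x) c) x := hdual1 _ _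
        rw [e]
        exact LWord.ofTl x ((ih (tr a x) (LWord.ofTr x ha hx)).2) hx
  have part1 : ∀ a b : Q, LWord tr tl S a → LWord tr tl S b →
      LWord tr tl S (tr a b) ∧ LWord tr tl S (tl a b) := fun a b ha hb => key b hb a ha
  refine ⟨part1, ?_⟩
  apply Set.Subset.antisymm
  · intro a ha T hT
    obtain ⟨hST, hTr, hTl⟩ := hT
    induction ha with
    | base x hx => exact hST hx
    | ofTr x _ hx ih => exact hTr _ ih _ (hST hx)
    | ofTl x _ hx ih => exact hTl _ ih _ (hST hx)
  · intro a ha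
    exact ha {a : Q | LWord tr tl S a}
      ⟨fun x hx => LWord.base x hx,
       fun u hu v hv => (part1 u v hu hv).1,
       fun u hu v hv => (part1 u v hu hv).2⟩
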